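/- Let A be a supercommutative ℂ-algebra and let g = [[a, b], [c, d]] be a 2×2 matrix over A with a, d ∈ A₀ invertible and b, c ∈ A₁. Then there exist unique elements t, s ∈ A₀ invertible and θ, η ∈ A₁ such that g = [[t, 0], [0, s]] · [[1, θ], [−iθ, 1]] · [[1, iη], [−η, 1]], i.e. g = diag(t, s)(1 + θU)(1 + ηS) where U = [[0, 1], [−i, 0]] and S = [[0, i], [−1, 0]] are the complex matrices defining the odd generators of su(1|1). -/

import Mathlib

/-- **Lemma 4.4 of the paper.** Let `A` be a supercommutative
ℂ-algebra and `g = [[a, b], [c, d]]` a `2×2` matrix over `A` with `a, d ∈ A₀`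
invertible and `b, c ∈ A₁`.  Then there exist unique invertible `t, s ∈ A₀` and
`θ, η ∈ A₁` with
`g = [[t, 0], [0, s]] · [[1, θ], [-iθ, 1]] · [[1, iη], [-η, 1]]`,
i.e. `g = diag(t, s)(1 + θU)(1 + ηS)` for the odd generators `U`, `S` of `su(1|1)`. -/
theorem su11_unique_factorization
    (A : Type*) [Ring A] [Algebra ℂ A]
    (A0 A1 : Submodule ℂ A) (hsum : IsCompl A0 A1)
    (h1mem : (1 : A) ∈ A0)
    (h00 : ∀ x ∈ A0, ∀ y ∈ A0, x * y ∈ A0)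
    (h01 : ∀ x ∈ A0, ∀ y ∈ A1, x * y ∈ A1)
    (h10 : ∀ x ∈ A1, ∀ y ∈ A0, x * y ∈ A1)
    (h11 : ∀ x ∈ A1, ∀ y ∈ A1, x * y ∈ A0)
    (hcentral : ∀ x ∈ A0, ∀ y : A, x * y = y * x)
    (hanti : ∀ x ∈ A1, ∀ y ∈ A1, x * y = -(y * x))
    (a b c d : A)
    (ha : a ∈ A0) (hd : d ∈ A0) (haU : IsUnit a) (hdU : IsUnit d)
    (hb : b ∈ A1) (hc : c ∈ A1) :
    ∃! p : A × A × A × A,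
      p.1 ∈ A0 ∧ IsUnit p.1 ∧
      p.2.1 ∈ A0 ∧ IsUnit p.2.1 ∧
      p.2.2.1 ∈ A1 ∧ p.2.2.2 ∈ A1 ∧
      (!![a, b; c, d] : Matrix (Fin 2) (Fin 2) A) =
        !![p.1, 0; 0, p.2.1] *
        !![1, p.2.2.1; -(algebraMap ℂ A Complex.I * p.2.2.1), 1] *
        !![1, algebraMap ℂ A Complex.I * p.2.2.2; -p.2.2.2, 1] := by
  set i0 : A := algebraMap ℂ A Complex.I with hi0def
  set h0 : A := algebraMap ℂ A (2⁻¹ : ℂ) with hh0def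
  -- basic centrality combinators
  have ci : ∀ u : A, i0 * u = u * i0 := fun u => by rw [hi0def]; exact Algebra.commutes _ _
  have ch : ∀ u : A, h0 * u = u * h0 := fun u => by rw [hh0def]; exact Algebra.commutes _ _
  have mid : ∀ x : A, (∀ u : A, x * u = u * x) → ∀ y z : A, y * (x * z) = x * (y * z) := by
    intro x hx y z; rw [← mul_assoc, ← hx y, mul_assoc]
  have com : ∀ x : A, (∀ u : A, x * u = u * x) → ∀ y : A, y * x = x * y :=
    fun x hx y => (hx y).symm
  have Uh : ∀ y z : A, y * (h0 * z) = h0 * (y * z) := mid h0 ch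
  have Uh' : ∀ y : A, y * h0 = h0 * y := com h0 ch
  -- numeric facts
  have h2h : (2 : A) * h0 = 1 := by
    rw [hh0def, show ((2 : A) = algebraMap ℂ A (2 : ℂ)) from (map_ofNat (algebraMap ℂ A) 2).symm,
      ← map_mul]
    norm_num
  have hdbl1 : ∀ x : A, h0 * x + h0 * x = x := by
    intro x; rw [← two_mul, ← mul_assoc, h2h, one_mul]
  have hdbl2 : ∀ x : A, h0 * (h0 * (x + x)) = h0 * x := by
    intro x; rw [mul_add, hdbl1]
  have hii1 : i0 * i0 = -1 := by
    rw [hi0def, ← map_mul, Complex.I_mul_I, map_neg, map_one]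
  have hiix : ∀ x : A, i0 * (i0 * x) = -x := by
    intro x; rw [← mul_assoc, hii1, neg_one_mul]
  have hfact : ∀ X Y : A, (h0 * X) * (-(h0 * Y)) = -(h0 * (h0 * (X * Y))) := by
    intro X Y; rw [mul_neg, mul_assoc, Uh X Y]
  have hii2 : ∀ X Y : A, (i0 * X) * (i0 * Y) = -(X * Y) := by
    intro X Y; rw [mul_assoc, mid i0 ci X Y, hiix]
  -- odd nilpotency / anticommutation
  have halfzero : ∀ x : A, x + x = 0 → x = 0 := by
    intro x hx
    have h2 : (2 : ℂ) • x = 0 := by rw [two_smul]; exact hx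
    calc x = ((2 : ℂ)⁻¹ * 2) • x := by norm_num
      _ = (2 : ℂ)⁻¹ • ((2 : ℂ) • x) := by rw [smul_smul]
      _ = 0 := by rw [h2, smul_zero]
  have hbb : b * b = 0 := halfzero _ (by nth_rewrite 2 [hanti b hb b hb]; exact add_neg_cancel _)
  have hcc : c * c = 0 := halfzero _ (by nth_rewrite 2 [hanti c hc c hc]; exact add_neg_cancel _)
  have hcb : c * b = -(b * c) := hanti c hc b hb
  have hbbx : ∀ x : A, b * (b * x) = 0 := by intro x; rw [← mul_assoc, hbb, zero_mul]
  have hccx : ∀ x : A, c * (c * x) = 0 := by intro x; rw [← mul_assoc, hcc, zero_mul]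
  have hcbx : ∀ x : A, c * (b * x) = -(b * (c * x)) := by
    intro x; rw [← mul_assoc, hcb, neg_mul, mul_assoc]
  -- inverses of even units are even
  have invMem : ∀ x y : A, x ∈ A0 → x * y = 1 → y * x = 1 → y ∈ A0 := by
    intro x y hx hxy hyx
    obtain ⟨u, v, hu, hv, huv⟩ := Submodule.codisjoint_iff_exists_add_eq.mp hsum.codisjoint y
    have hxy' : x * u + x * v = 1 := by rw [← mul_add, huv, hxy]
    have hxv0 : x * v = 0 := by
      have m0 : x * v ∈ A0 := by
        have : x * v = 1 - x * u := by rw [← hxy']; abel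
        rw [this]; exact Submodule.sub_mem _ h1mem (h00 x hx u hu)
      exact Submodule.disjoint_def.mp hsum.disjoint _ m0 (h01 x hx v hv)
    have hv0 : v = 0 := by
      calc v = (y * x) * v := by rw [hyx, one_mul]
        _ = y * (x * v) := by rw [mul_assoc]
        _ = 0 := by rw [hxv0, mul_zero]
    rw [← huv, hv0, add_zero]; exact hu
  -- set up the inverses of a and d
  obtain ⟨ua, hua⟩ := haU
  obtain ⟨ud, hud⟩ := hdU
  set ai : A := ↑ua⁻¹ with hai
  set di : A := ↑ud⁻¹ with hdi
  have haai1 : a * ai = 1 := by rw [← hua]; exact ua.mul_inv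
  have haia1 : ai * a = 1 := by rw [← hua]; exact ua.inv_mul
  have hddi1 : d * di = 1 := by rw [← hud]; exact ud.mul_inv
  have hdid1 : di * d = 1 := by rw [← hud]; exact ud.inv_mul
  have haaix : ∀ x : A, a * (ai * x) = x := by intro x; rw [← mul_assoc, haai1, one_mul]
  have haiax : ∀ x : A, ai * (a * x) = x := by intro x; rw [← mul_assoc, haia1, one_mul]
  have hddix : ∀ x : A, d * (di * x) = x := by intro x; rw [← mul_assoc, hddi1, one_mul]
  have hdidx : ∀ x : A, di * (d * x) = x := by intro x; rw [← mul_assoc, hdid1, one_mul]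
  have haU : IsUnit a := ⟨ua, hua⟩
  have hdU : IsUnit d := ⟨ud, hud⟩
  have hai0 : ai ∈ A0 := invMem a ai ha haai1 haia1
  have hdi0 : di ∈ A0 := invMem d di hd hddi1 hdid1
  have caC : ∀ u : A, a * u = u * a := hcentral a ha
  have caiC : ∀ u : A, ai * u = u * ai := hcentral ai hai0
  have cdC : ∀ u : A, d * u = u * d := hcentral d hd
  have cdiC : ∀ u : A, di * u = u * di := hcentral di hdi0
  have i0mem : i0 ∈ A0 := by
    rw [hi0def, Algebra.algebraMap_eq_smul_one]; exact A0.smul_mem _ h1mem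
  have h0mem : h0 ∈ A0 := by
    rw [hh0def, Algebra.algebraMap_eq_smul_one]; exact A0.smul_mem _ h1mem
  -- the matrix equation, entrywise
  have hmat : ∀ t s θ η : A,
      ((!![a, b; c, d] : Matrix (Fin 2) (Fin 2) A) =
        !![t, 0; 0, s] * !![1, θ; -(i0 * θ), 1] * !![1, i0 * η; -η, 1]) ↔
      (a = t + -(t * θ * η) ∧ b = t * (i0 * η) + t * θ ∧
       c = -(s * (i0 * θ)) + -(s * η) ∧ d = -(s * (i0 * θ) * (i0 * η)) + s) := by
    intro t s θ η
    rw [Matrix.mul_fin_two, Matrix.mul_fin_two, ← Matrix.ext_iff]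
    constructor
    · intro h
      exact ⟨by simpa using h 0 0, by simpa using h 0 1, by simpa using h 1 0,
        by simpa using h 1 1⟩
    · rintro ⟨h1, h2, h3, h4⟩ i j
      fin_cases i <;> fin_cases j
      · simpa using h1
      · simpa using h2
      · simpa using h3
      · simpa using h4
  -- key products for the existence part
  have K0 : (ai * b + i0 * (di * c)) * (i0 * (ai * b) + di * c)
      = ai * (di * (b * c)) + ai * (di * (b * c)) := by
    simp only [mul_add, add_mul, mul_sub, sub_mul, neg_mul, mul_neg, neg_neg, one_mul, mul_one, zero_mul, mul_zero, add_zero, zero_add, neg_zero, neg_add, mul_assoc, sub_eq_add_neg, Uh, Uh', mid i0 ci a, com i0 ci a, mid i0 ci ai, com i0 ci ai, mid i0 ci d, com i0 ci d, mid i0 ci di, com i0 ci di, mid i0 ci b, com i0 ci b, mid i0 ci c, com i0 ci c, mid a caC ai, com a caC ai, mid a caC d, com a caC d, mid a caC di, com a caC di, mid a caC b, com a caC b, mid a caC c, com a caC c, mid ai caiC d, com ai caiC d, mid ai caiC di, com ai caiC di, mid ai caiC b, com ai caiC b, mid ai caiC c, com ai caiC c, mid d cdC di, com d cdC di, mid d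 cdC b, com d cdC b, mid d cdC c, com d cdC c, mid di cdiC b, com di cdiC b, mid di cdiC c, com di cdiC c, hii1, hiix, neg_one_mul, haai1, haia1, haaix, haiax, hddi1, hdid1, hddix, hdidx, hbb, hbbx, hcc, hccx, hcb, hcbx]
  have KTH : (h0 * (ai * b + i0 * (di * c))) * (-(h0 * (i0 * (ai * b) + di * c)))
      = -(h0 * (ai * (di * (b * c)))) := by
    rw [hfact, K0, hdbl2]
  have KT : (a - h0 * (di * (b * c))) * (h0 * (ai * (di * (b * c)))) = h0 * (di * (b * c)) := by
    simp only [mul_add, add_mul, mul_sub, sub_mul, neg_mul, mul_neg, neg_neg, one_mul, mul_one, zero_mul, mul_zero, add_zero, zero_add, neg_zero, neg_add, mul_assoc, sub_eq_add_neg, Uh, Uh', mid i0 ci a, com i0 ci a, mid i0 ci ai, com i0 ci ai, mid i0 ci d, com i0 ci d, mid i0 ci di, com i0 ci di, mid i0 ci b, com i0 ci b, mid i0 ci c, com i0 ci c, mid a caC ai, com a caC ai, mid a caC d, com a caC d, mid a caC di, com a caC di, mid a caC b, com a caC b, mid a caC c, com a caC c, mid ai caiC d, com ai caiC d, mid ai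 caiC di, com ai caiC di, mid ai caiC b, com ai caiC b, mid ai caiC c, com ai caiC c, mid d cdC di, com d cdC di, mid d cdC b, com d cdC b, mid d cdC c, com d cdC c, mid di cdiC b, com di cdiC b, mid di cdiC c, com di cdiC c, hii1, hiix, neg_one_mul, haai1, haia1, haaix, haiax, hddi1, hdid1, hddix, hdidx, hbb, hbbx, hcc, hccx, hcb, hcbx]
  have KTTh : (a - h0 * (di * (b * c))) * (h0 * (ai * b + i0 * (di * c)))
      = h0 * b + h0 * (i0 * (a * (di * c))) := by
    simp only [mul_add, add_mul, mul_sub, sub_mul, neg_mul, mul_neg, neg_neg, one_mul, mul_one, zero_mul, mul_zero, add_zero, zero_add, neg_zero, neg_add, mul_assoc, sub_eq_add_neg, Uh, Uh', mid i0 ci a, com i0 ci a, mid i0 ci ai, com i0 ci ai, mid i0 ci d, com i0 ci d, mid i0 ci di, com i0 ci di, mid i0 ci b, com i0 ci b, mid i0 ci c, com i0 ci c, mid a caC ai, com a caC ai, mid a caC d, com a caC d, mid a caC di, com a caC di, mid a caC b, com a caC b, mid a caC c, com a caC c, mid ai caiC d, com ai caiC d, mid ai caiC di, com ai caiC di, mid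 ai caiC b, com ai caiC b, mid ai caiC c, com ai caiC c, mid d cdC di, com d cdC di, mid d cdC b, com d cdC b, mid d cdC c, com d cdC c, mid di cdiC b, com di cdiC b, mid di cdiC c, com di cdiC c, hii1, hiix, neg_one_mul, haai1, haia1, haaix, haiax, hddi1, hdid1, hddix, hdidx, hbb, hbbx, hcc, hccx, hcb, hcbx]
  have KTiH : (a - h0 * (di * (b * c))) * (i0 * (-(h0 * (i0 * (ai * b) + di * c))))
      = h0 * b - h0 * (i0 * (a * (di * c))) := by
    simp only [mul_add, add_mul, mul_sub, sub_mul, neg_mul, mul_neg, neg_neg, one_mul, mul_one, zero_mul, mul_zero, add_zero, zero_add, neg_zero, neg_add, mul_assoc, sub_eq_add_neg, Uh, Uh', mid i0 ci a, com i0 ci a, mid i0 ci ai, com i0 ci ai, mid i0 ci d, com i0 ci d, mid i0 ci di, com i0 ci di, mid i0 ci b, com i0 ci b, mid i0 ci c, com i0 ci c, mid a caC ai, com a caC ai, mid a caC d, com a caC d, mid a caC di, com a caC di, mid a caC b, com a caC b, mid a caC c, com a caC c, mid ai caiC d, com ai caiC d, mid ai caiC di, com ai caiC di, mid ai caiC b,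 com ai caiC b, mid ai caiC c, com ai caiC c, mid d cdC di, com d cdC di, mid d cdC b, com d cdC b, mid d cdC c, com d cdC c, mid di cdiC b, com di cdiC b, mid di cdiC c, com di cdiC c, hii1, hiix, neg_one_mul, haai1, haia1, haaix, haiax, hddi1, hdid1, hddix, hdidx, hbb, hbbx, hcc, hccx, hcb, hcbx]
  have KSiTh : (d + h0 * (ai * (b * c))) * (i0 * (h0 * (ai * b + i0 * (di * c))))
      = h0 * (i0 * (ai * (d * b))) - h0 * c := by
    simp only [mul_add, add_mul, mul_sub, sub_mul, neg_mul, mul_neg, neg_neg, one_mul, mul_one, zero_mul, mul_zero, add_zero, zero_add, neg_zero, neg_add, mul_assoc, sub_eq_add_neg, Uh, Uh', mid i0 ci a, com i0 ci a, mid i0 ci ai, com i0 ci ai, mid i0 ci d, com i0 ci d, mid i0 ci di, com i0 ci di, mid i0 ci b, com i0 ci b, mid i0 ci c, com i0 ci c, mid a caC ai, com a caC ai, mid a caC d, com a caC d, mid a caC di, com a caC di, mid a caC b, com a caC b, mid a caC c, com a caC c, mid ai caiC d, com ai caiC d, mid ai caiC di, com ai caiC di, mid ai caiC b, com ai caiC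 b, mid ai caiC c, com ai caiC c, mid d cdC di, com d cdC di, mid d cdC b, com d cdC b, mid d cdC c, com d cdC c, mid di cdiC b, com di cdiC b, mid di cdiC c, com di cdiC c, hii1, hiix, neg_one_mul, haai1, haia1, haaix, haiax, hddi1, hdid1, hddix, hdidx, hbb, hbbx, hcc, hccx, hcb, hcbx]
  have KSH : (d + h0 * (ai * (b * c))) * (-(h0 * (i0 * (ai * b) + di * c)))
      = -(h0 * (i0 * (ai * (d * b)))) - h0 * c := by
    simp only [mul_add, add_mul, mul_sub, sub_mul, neg_mul, mul_neg, neg_neg, one_mul, mul_one, zero_mul, mul_zero, add_zero, zero_add, neg_zero, neg_add, mul_assoc, sub_eq_add_neg, Uh, Uh', mid i0 ci a, com i0 ci a, mid i0 ci ai, com i0 ci ai, mid i0 ci d, com i0 ci d, mid i0 ci di, com i0 ci di, mid i0 ci b, com i0 ci b, mid i0 ci c, com i0 ci c, mid a caC ai, com a caC ai, mid a caC d, com a caC d, mid a caC di, com a caC di, mid a caC b, com a caC b, mid a caC c, com a caC c, mid ai caiC d, com ai caiC d, mid ai caiC di, com ai caiC di, mid ai caiC b, com ai caiC b, mid ai caiC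 c, com ai caiC c, mid d cdC di, com d cdC di, mid d cdC b, com d cdC b, mid d cdC c, com d cdC c, mid di cdiC b, com di cdiC b, mid di cdiC c, com di cdiC c, hii1, hiix, neg_one_mul, haai1, haia1, haaix, haiax, hddi1, hdid1, hddix, hdidx, hbb, hbbx, hcc, hccx, hcb, hcbx]
  have KS4 : (d + h0 * (ai * (b * c))) * (i0 * (h0 * (ai * b + i0 * (di * c)))) *
      (i0 * (-(h0 * (i0 * (ai * b) + di * c)))) = h0 * (ai * (b * c)) := by
    rw [mul_assoc, hii2, KTH, neg_neg]
    simp only [mul_add, add_mul, mul_sub, sub_mul, neg_mul, mul_neg, neg_neg, one_mul, mul_one, zero_mul, mul_zero, add_zero, zero_add, neg_zero, neg_add, mul_assoc, sub_eq_add_neg, Uh, Uh', mid i0 ci a, com i0 ci a, mid i0 ci ai, com i0 ci ai, mid i0 ci d, com i0 ci d, mid i0 ci di, com i0 ci di, mid i0 ci b, com i0 ci b, mid i0 ci c, com i0 ci c, mid a caC ai, com a caC ai, mid a caC d, com a caC d, mid a caC di, com a caC di, mid a caC b, com a caC b, mid a caC c, com a caC c, mid ai caiC d, com ai caiC d, mid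 ai caiC di, com ai caiC di, mid ai caiC b, com ai caiC b, mid ai caiC c, com ai caiC c, mid d cdC di, com d cdC di, mid d cdC b, com d cdC b, mid d cdC c, com d cdC c, mid di cdiC b, com di cdiC b, mid di cdiC c, com di cdiC c, hii1, hiix, neg_one_mul, haai1, haia1, haaix, haiax, hddi1, hdid1, hddix, hdidx, hbb, hbbx, hcc, hccx, hcb, hcbx]
  -- the four entry identities for the chosen witness
  have G1 : a = (a - h0 * (di * (b * c))) +
      -((a - h0 * (di * (b * c))) * (h0 * (ai * b + i0 * (di * c))) *
        (-(h0 * (i0 * (ai * b) + di * c)))) := by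
    rw [mul_assoc, KTH, mul_neg, KT, neg_neg]; abel
  have G2 : b = (a - h0 * (di * (b * c))) * (i0 * (-(h0 * (i0 * (ai * b) + di * c)))) +
      (a - h0 * (di * (b * c))) * (h0 * (ai * b + i0 * (di * c))) := by
    rw [KTiH, KTTh]
    conv_lhs => rw [← hdbl1 b]
    abel
  have G3 : c = -((d + h0 * (ai * (b * c))) * (i0 * (h0 * (ai * b + i0 * (di * c))))) +
      -((d + h0 * (ai * (b * c))) * (-(h0 * (i0 * (ai * b) + di * c)))) := by
    rw [KSiTh, KSH]
    conv_lhs => rw [← hdbl1 c]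
    abel
  have G4 : d = -((d + h0 * (ai * (b * c))) * (i0 * (h0 * (ai * b + i0 * (di * c)))) *
      (i0 * (-(h0 * (i0 * (ai * b) + di * c))))) + (d + h0 * (ai * (b * c))) := by
    rw [KS4]; abel
  -- memberships and invertibility of the witness
  have memT : a - h0 * (di * (b * c)) ∈ A0 :=
    Submodule.sub_mem _ ha (h00 _ h0mem _ (h00 _ hdi0 _ (h11 b hb c hc)))
  have memS : d + h0 * (ai * (b * c)) ∈ A0 :=
    Submodule.add_mem _ hd (h00 _ h0mem _ (h00 _ hai0 _ (h11 b hb c hc)))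
  have memTh : h0 * (ai * b + i0 * (di * c)) ∈ A1 :=
    h01 _ h0mem _ (Submodule.add_mem _ (h01 _ hai0 _ hb) (h01 _ i0mem _ (h01 _ hdi0 _ hc)))
  have memH : -(h0 * (i0 * (ai * b) + di * c)) ∈ A1 :=
    Submodule.neg_mem _ (h01 _ h0mem _
      (Submodule.add_mem _ (h01 _ i0mem _ (h01 _ hai0 _ hb)) (h01 _ hdi0 _ hc)))
  have nilT : (-(h0 * (di * (b * c)))) * (-(h0 * (di * (b * c)))) = 0 := by
    simp only [mul_add, add_mul, mul_sub, sub_mul, neg_mul, mul_neg, neg_neg, one_mul, mul_one, zero_mul, mul_zero, add_zero, zero_add, neg_zero, neg_add, mul_assoc, sub_eq_add_neg, Uh, Uh', mid i0 ci a, com i0 ci a, mid i0 ci ai, com i0 ci ai, mid i0 ci d, com i0 ci d, mid i0 ci di, com i0 ci di, mid i0 ci b, com i0 ci b, mid i0 ci c, com i0 ci c, mid a caC ai, com a caC ai, mid a caC d, com a caC d, mid a caC di, com a caC di, mid a caC b, com a caC b, mid a caC c, com a caC c, mid ai caiC d, com ai caiC d, mid ai caiC di, com ai caiC di, mid ai caiC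 b, com ai caiC b, mid ai caiC c, com ai caiC c, mid d cdC di, com d cdC di, mid d cdC b, com d cdC b, mid d cdC c, com d cdC c, mid di cdiC b, com di cdiC b, mid di cdiC c, com di cdiC c, hii1, hiix, neg_one_mul, haai1, haia1, haaix, haiax, hddi1, hdid1, hddix, hdidx, hbb, hbbx, hcc, hccx, hcb, hcbx]
  have nilS : (h0 * (ai * (b * c))) * (h0 * (ai * (b * c))) = 0 := by
    simp only [mul_add, add_mul, mul_sub, sub_mul, neg_mul, mul_neg, neg_neg, one_mul, mul_one, zero_mul, mul_zero, add_zero, zero_add, neg_zero, neg_add, mul_assoc, sub_eq_add_neg, Uh, Uh', mid i0 ci a, com i0 ci a, mid i0 ci ai, com i0 ci ai, mid i0 ci d, com i0 ci d, mid i0 ci di, com i0 ci di, mid i0 ci b, com i0 ci b, mid i0 ci c, com i0 ci c, mid a caC ai, com a caC ai, mid a caC d, com a caC d, mid a caC di, com a caC di, mid a caC b, com a caC b, mid a caC c, com a caC c, mid ai caiC d, com ai caiC d, mid ai caiC di, com ai caiC di, mid ai caiC b, com ai caiC b, mid ai caiC c, com ai caiC c, mid d cdC di, com d cdC di, mid d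 cdC b, com d cdC b, mid d cdC c, com d cdC c, mid di cdiC b, com di cdiC b, mid di cdiC c, com di cdiC c, hii1, hiix, neg_one_mul, haai1, haia1, haaix, haiax, hddi1, hdid1, hddix, hdidx, hbb, hbbx, hcc, hccx, hcb, hcbx]
  have unitT : IsUnit (a - h0 * (di * (b * c))) := by
    rw [sub_eq_add_neg]
    exact IsNilpotent.isUnit_add_left_of_commute ⟨2, by rw [sq, nilT]⟩ haU
      (hcentral _ (Submodule.neg_mem _ (h00 _ h0mem _ (h00 _ hdi0 _ (h11 b hb c hc)))) a)
  have unitS : IsUnit (d + h0 * (ai * (b * c))) :=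
    IsNilpotent.isUnit_add_left_of_commute ⟨2, by rw [sq, nilS]⟩ hdU
      (hcentral _ (h00 _ h0mem _ (h00 _ hai0 _ (h11 b hb c hc))) d)
  refine ⟨⟨a - h0 * (di * (b * c)), d + h0 * (ai * (b * c)),
      h0 * (ai * b + i0 * (di * c)), -(h0 * (i0 * (ai * b) + di * c))⟩,
    ⟨memT, unitT, memS, unitS, memTh, memH, (hmat _ _ _ _).mpr ⟨G1, G2, G3, G4⟩⟩, ?_⟩
  -- uniqueness
  rintro ⟨t, s, θ, η⟩ ⟨ht0, htU, hs0, hsU, hth1, heta1, heq⟩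
  dsimp only at ht0 htU hs0 hsU hth1 heta1 heq ⊢
  obtain ⟨E1, E2, E3, E4⟩ := (hmat t s θ η).mp heq
  obtain ⟨ut, hut⟩ := htU
  obtain ⟨us, hus⟩ := hsU
  set ti : A := ↑ut⁻¹ with hti
  set si : A := ↑us⁻¹ with hsi
  have htti1 : t * ti = 1 := by rw [← hut]; exact ut.mul_inv
  have htit1 : ti * t = 1 := by rw [← hut]; exact ut.inv_mul
  have hssi1 : s * si = 1 := by rw [← hus]; exact us.mul_inv
  have hsis1 : si * s = 1 := by rw [← hus]; exact us.inv_mul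
  have httix : ∀ x : A, t * (ti * x) = x := by intro x; rw [← mul_assoc, htti1, one_mul]
  have htitx : ∀ x : A, ti * (t * x) = x := by intro x; rw [← mul_assoc, htit1, one_mul]
  have hssix : ∀ x : A, s * (si * x) = x := by intro x; rw [← mul_assoc, hssi1, one_mul]
  have hsisx : ∀ x : A, si * (s * x) = x := by intro x; rw [← mul_assoc, hsis1, one_mul]
  have hti0 : ti ∈ A0 := invMem t ti ht0 htti1 htit1
  have hsi0 : si ∈ A0 := invMem s si hs0 hssi1 hsis1
  have ctiC : ∀ u : A, ti * u = u * ti := hcentral ti hti0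
  have csiC : ∀ u : A, si * u = u * si := hcentral si hsi0
  -- derive the normal forms of θ and η
  have D2 : ti * b = i0 * η + θ := by rw [E2, mul_add, htitx, htitx]
  have D3 : si * c = -(i0 * θ) + -η := by
    rw [E3, mul_add, mul_neg, mul_neg, hsisx, hsisx]
  have Dth : θ = h0 * (ti * b + i0 * (si * c)) := by
    rw [D2, D3]
    simp only [mul_add, mul_neg, hiix, neg_neg]
    conv_lhs => rw [← hdbl1 θ]
    abel
  have Deta : η = -(h0 * (i0 * (ti * b) + si * c)) := by
    rw [D2, D3]
    simp only [mul_add, mul_neg, hiix, neg_neg]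
    conv_lhs => rw [← hdbl1 η]
    abel
  have DPre : (ti * b + i0 * (si * c)) * (i0 * (ti * b) + si * c)
      = ti * (si * (b * c)) + ti * (si * (b * c)) := by
    simp only [mul_add, add_mul, mul_sub, sub_mul, neg_mul, mul_neg, neg_neg, one_mul, mul_one, zero_mul, mul_zero, add_zero, zero_add, neg_zero, neg_add, mul_assoc, sub_eq_add_neg, Uh, Uh', mid i0 ci a, com i0 ci a, mid i0 ci ai, com i0 ci ai, mid i0 ci d, com i0 ci d, mid i0 ci di, com i0 ci di, mid i0 ci ti, com i0 ci ti, mid i0 ci si, com i0 ci si, mid i0 ci b, com i0 ci b, mid i0 ci c, com i0 ci c, mid a caC ai, com a caC ai, mid a caC d, com a caC d, mid a caC di, com a caC di, mid a caC ti, com a caC ti, mid a caC si, com a caC si, mid a caC b, com a caC b, mid a caC c, com a caC c, mid ai caiC d, com ai caiC d, mid ai caiC di, com ai caiC di, mid ai caiC ti, com ai caiC ti, mid ai caiC si, com ai caiC si, mid ai caiC b, com ai caiC b, mid ai caiC c, com ai caiC c, mid d cdC di, com d cdC di, mid d cdC ti, com d cdC ti, mid d cdC si, com d cdC si, mid d cdC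 b, com d cdC b, mid d cdC c, com d cdC c, mid di cdiC ti, com di cdiC ti, mid di cdiC si, com di cdiC si, mid di cdiC b, com di cdiC b, mid di cdiC c, com di cdiC c, mid ti ctiC si, com ti ctiC si, mid ti ctiC b, com ti ctiC b, mid ti ctiC c, com ti ctiC c, mid si csiC b, com si csiC b, mid si csiC c, com si csiC c, hii1, hiix, neg_one_mul, haai1, haia1, haaix, haiax, hddi1, hdid1, hddix, hdidx, hbb, hbbx, hcc, hccx, hcb, hcbx, htti1, htit1, httix, htitx, hssi1, hsis1, hssix, hsisx]
  have Dthe : θ * η = -(h0 * (ti * (si * (b * c)))) := by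
    rw [Dth, Deta, hfact, DPre, hdbl2]
  -- recover t and s
  rw [mul_assoc, Dthe] at E1
  simp only [mul_neg, neg_neg] at E1
  rw [Uh, httix] at E1
  have Ht : t = a - h0 * (si * (b * c)) := eq_sub_of_add_eq E1.symm
  rw [mul_assoc, hii2, Dthe] at E4
  simp only [neg_neg, mul_neg] at E4
  rw [Uh, mid ti ctiC s, hssix] at E4
  have Hs : s = d + h0 * (ti * (b * c)) := by rw [E4]; abel
  have h1s : s * (di * (b * c)) = b * c := by
    rw [Hs]; simp only [mul_add, add_mul, mul_sub, sub_mul, neg_mul, mul_neg, neg_neg, one_mul, mul_one, zero_mul, mul_zero, add_zero, zero_add, neg_zero, neg_add, mul_assoc, sub_eq_add_neg, Uh, Uh', mid i0 ci a, com i0 ci a, mid i0 ci ai, com i0 ci ai, mid i0 ci d, com i0 ci d, mid i0 ci di, com i0 ci di, mid i0 ci ti, com i0 ci ti, mid i0 ci si, com i0 ci si, mid i0 ci b, com i0 ci b, mid i0 ci c, com i0 ci c, mid a caC ai, com a caC ai, mid a caC d, com a caC d, mid a caC di, com a caC di, mid a caC ti, com a caC ti, mid a caC si, com a caC si, mid a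 caC b, com a caC b, mid a caC c, com a caC c, mid ai caiC d, com ai caiC d, mid ai caiC di, com ai caiC di, mid ai caiC ti, com ai caiC ti, mid ai caiC si, com ai caiC si, mid ai caiC b, com ai caiC b, mid ai caiC c, com ai caiC c, mid d cdC di, com d cdC di, mid d cdC ti, com d cdC ti, mid d cdC si, com d cdC si, mid d cdC b, com d cdC b, mid d cdC c, com d cdC c, mid di cdiC ti, com di cdiC ti, mid di cdiC si, com di cdiC si, mid di cdiC b, com di cdiC b, mid di cdiC c, com di cdiC c, mid ti ctiC si, com ti ctiC si, mid ti ctiC b, com ti ctiC b, mid ti ctiC c, com ti ctiC c, mid si csiC b, com si csiC b, mid si csiC c, com si csiC c, hii1, hiix, neg_one_mul, haai1, haia1, haaix, haiax, hddi1, hdid1, hddix, hdidx, hbb, hbbx, hcc, hccx, hcb, hcbx, htti1, htit1, httix, htitx, hssi1, hsis1, hssix, hsisx]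
  have Hsbc : si * (b * c) = di * (b * c) := by
    calc si * (b * c) = si * (s * (di * (b * c))) := by rw [h1s]
      _ = di * (b * c) := hsisx _
  have h1t : t * (ai * (b * c)) = b * c := by
    rw [Ht, Hsbc]; simp only [mul_add, add_mul, mul_sub, sub_mul, neg_mul, mul_neg, neg_neg, one_mul, mul_one, zero_mul, mul_zero, add_zero, zero_add, neg_zero, neg_add, mul_assoc, sub_eq_add_neg, Uh, Uh', mid i0 ci a, com i0 ci a, mid i0 ci ai, com i0 ci ai, mid i0 ci d, com i0 ci d, mid i0 ci di, com i0 ci di, mid i0 ci ti, com i0 ci ti, mid i0 ci si, com i0 ci si, mid i0 ci b, com i0 ci b, mid i0 ci c, com i0 ci c, mid a caC ai, com a caC ai, mid a caC d, com a caC d, mid a caC di, com a caC di, mid a caC ti, com a caC ti, mid a caC si, com a caC si, mid a caC b, com a caC b, mid a caC c, com a caC c, mid ai caiC d, com ai caiC d, mid ai caiC di, com ai caiC di, mid ai caiC ti, com ai caiC ti, mid ai caiC si, com ai caiC si, mid ai caiC b, com ai caiC b, mid ai caiC c, com ai caiC c, mid d cdC di, com d cdC di, mid d cdC ti, com d cdC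 ti, mid d cdC si, com d cdC si, mid d cdC b, com d cdC b, mid d cdC c, com d cdC c, mid di cdiC ti, com di cdiC ti, mid di cdiC si, com di cdiC si, mid di cdiC b, com di cdiC b, mid di cdiC c, com di cdiC c, mid ti ctiC si, com ti ctiC si, mid ti ctiC b, com ti ctiC b, mid ti ctiC c, com ti ctiC c, mid si csiC b, com si csiC b, mid si csiC c, com si csiC c, hii1, hiix, neg_one_mul, haai1, haia1, haaix, haiax, hddi1, hdid1, hddix, hdidx, hbb, hbbx, hcc, hccx, hcb, hcbx, htti1, htit1, httix, htitx, hssi1, hsis1, hssix, hsisx]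
  have Htbc : ti * (b * c) = ai * (b * c) := by
    calc ti * (b * c) = ti * (t * (ai * (b * c))) := by rw [h1t]
      _ = ai * (b * c) := htitx _
  have Ht2 : t = a - h0 * (di * (b * c)) := by rw [Ht, Hsbc]
  have Hs2 : s = d + h0 * (ai * (b * c)) := by rw [Hs, Htbc]
  have h2t : t * (ai * b) = b := by
    rw [Ht2]; simp only [mul_add, add_mul, mul_sub, sub_mul, neg_mul, mul_neg, neg_neg, one_mul, mul_one, zero_mul, mul_zero, add_zero, zero_add, neg_zero, neg_add, mul_assoc, sub_eq_add_neg, Uh, Uh', mid i0 ci a, com i0 ci a, mid i0 ci ai, com i0 ci ai, mid i0 ci d, com i0 ci d, mid i0 ci di, com i0 ci di, mid i0 ci ti, com i0 ci ti, mid i0 ci si, com i0 ci si, mid i0 ci b, com i0 ci b, mid i0 ci c, com i0 ci c, mid a caC ai, com a caC ai, mid a caC d, com a caC d, mid a caC di, com a caC di, mid a caC ti, com a caC ti, mid a caC si, com a caC si, mid a caC b, com a caC b, mid a caC c, com a caC c, mid ai caiC d, com ai caiC d, mid ai caiC di, com ai caiC di, mid ai caiC ti, com ai caiC ti, mid ai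 caiC si, com ai caiC si, mid ai caiC b, com ai caiC b, mid ai caiC c, com ai caiC c, mid d cdC di, com d cdC di, mid d cdC ti, com d cdC ti, mid d cdC si, com d cdC si, mid d cdC b, com d cdC b, mid d cdC c, com d cdC c, mid di cdiC ti, com di cdiC ti, mid di cdiC si, com di cdiC si, mid di cdiC b, com di cdiC b, mid di cdiC c, com di cdiC c, mid ti ctiC si, com ti ctiC si, mid ti ctiC b, com ti ctiC b, mid ti ctiC c, com ti ctiC c, mid si csiC b, com si csiC b, mid si csiC c, com si csiC c, hii1, hiix, neg_one_mul, haai1, haia1, haaix, haiax, hddi1, hdid1, hddix, hdidx, hbb, hbbx, hcc, hccx, hcb, hcbx, htti1, htit1, httix, htitx, hssi1, hsis1, hssix, hsisx]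
  have Htb : ti * b = ai * b := by
    calc ti * b = ti * (t * (ai * b)) := by rw [h2t]
      _ = ai * b := htitx _
  have h2s : s * (di * c) = c := by
    rw [Hs2]; simp only [mul_add, add_mul, mul_sub, sub_mul, neg_mul, mul_neg, neg_neg, one_mul, mul_one, zero_mul, mul_zero, add_zero, zero_add, neg_zero, neg_add, mul_assoc, sub_eq_add_neg, Uh, Uh', mid i0 ci a, com i0 ci a, mid i0 ci ai, com i0 ci ai, mid i0 ci d, com i0 ci d, mid i0 ci di, com i0 ci di, mid i0 ci ti, com i0 ci ti, mid i0 ci si, com i0 ci si, mid i0 ci b, com i0 ci b, mid i0 ci c, com i0 ci c, mid a caC ai, com a caC ai, mid a caC d, com a caC d, mid a caC di, com a caC di, mid a caC ti, com a caC ti, mid a caC si, com a caC si, mid a caC b, com a caC b, mid a caC c, com a caC c, mid ai caiC d, com ai caiC d, mid ai caiC di, com ai caiC di, mid ai caiC ti, com ai caiC ti, mid ai caiC si, com ai caiC si, mid ai caiC b, com ai caiC b, mid ai caiC c, com ai caiC c, mid d cdC di, com d cdC di, mid d cdC ti, com d cdC ti, mid d cdC si, com d cdC si, mid d cdC b, com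 d cdC b, mid d cdC c, com d cdC c, mid di cdiC ti, com di cdiC ti, mid di cdiC si, com di cdiC si, mid di cdiC b, com di cdiC b, mid di cdiC c, com di cdiC c, mid ti ctiC si, com ti ctiC si, mid ti ctiC b, com ti ctiC b, mid ti ctiC c, com ti ctiC c, mid si csiC b, com si csiC b, mid si csiC c, com si csiC c, hii1, hiix, neg_one_mul, haai1, haia1, haaix, haiax, hddi1, hdid1, hddix, hdidx, hbb, hbbx, hcc, hccx, hcb, hcbx, htti1, htit1, httix, htitx, hssi1, hsis1, hssix, hsisx]
  have Hsc : si * c = di * c := by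
    calc si * c = si * (s * (di * c)) := by rw [h2s]
      _ = di * c := hsisx _
  have Hth : θ = h0 * (ai * b + i0 * (di * c)) := by rw [Dth, Htb, Hsc]
  have Heta : η = -(h0 * (i0 * (ai * b) + di * c)) := by rw [Deta, Htb, Hsc]
  simp only [Prod.mk.injEq]
  exact ⟨Ht2, Hs2, Hth, Heta⟩
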